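/- arXiv:2103.16333 — 2 statements merged into one kernel-verified Lean document; each statement's English description precedes it below -/
import Mathlib

section
/- Let b ∈ W^{1,1}(0,T), g ∈ C(ℝ) with g(ξ) → -∞ as ξ → ∞, and let y ∈ W^{1,1}(0,T) solve y'(t) = g(y(t)) + b'(t) on [0,T] with y(0) = y₀. Suppose there exist constants N₀ ≥ 0 and N₁ ≥ 0 such that b(t₂) - b(t₁) ≤ N₀ + N₁(t₂ - t₁) for all 0 ≤ t₁ < t₂ ≤ T, and let ξ* be such that g(ξ) ≤ -N₁ for all ξ ≥ ξ*. Then y(t) ≤ max{y₀, ξ*} + N₀ for all t ∈ [0,T]. -/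
/-- Zlotnik's inequality: a comparison lemma for ODEs `y' = g(y) + b'`
with linearly bounded forcing `b`. -/
theorem zlotnik_inequality
    (T y₀ N₀ N₁ ξ₀ : ℝ) (hT : 0 < T)
    (g : ℝ → ℝ) (hg : Continuous g)
    (hgtop : Filter.Tendsto g Filter.atTop Filter.atBot)
    (b y b' : ℝ → ℝ)
    (hb : ∀ t ∈ Set.Icc (0:ℝ) T, HasDerivAt b (b' t) t)
    (hy : ∀ t ∈ Set.Icc (0:ℝ) T, HasDerivAt y (g (y t) + b' t) t)
    (hy0 : y 0 = y₀)
    (hN₀ : 0 ≤ N₀) (hN₁ : 0 ≤ N₁)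
    (hbgrowth : ∀ t₁ t₂ : ℝ, 0 ≤ t₁ → t₁ < t₂ → t₂ ≤ T →
      b t₂ - b t₁ ≤ N₀ + N₁ * (t₂ - t₁))
    (hξ : ∀ ξ : ℝ, ξ₀ ≤ ξ → g ξ ≤ -N₁) :
    ∀ t ∈ Set.Icc (0:ℝ) T, y t ≤ max y₀ ξ₀ + N₀ := by
  set M := max y₀ ξ₀ with hM
  by_contra hcon
  push_neg at hcon
  obtain ⟨t₂, ht₂, ht₂y⟩ := hcon
  have hy0M : y 0 ≤ M := by rw [hy0]; exact le_max_left _ _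
  set S : Set ℝ := Set.Icc 0 t₂ ∩ y ⁻¹' Set.Iic M with hS
  have hIccT : Set.Icc (0:ℝ) t₂ ⊆ Set.Icc 0 T :=
    Set.Icc_subset_Icc le_rfl ht₂.2
  have hycont : ContinuousOn y (Set.Icc 0 t₂) := fun t ht =>
    ((hy t (hIccT ht)).continuousAt).continuousWithinAt
  have h0S : (0:ℝ) ∈ S := ⟨⟨le_rfl, ht₂.1⟩, hy0M⟩
  have hSne : S.Nonempty := ⟨0, h0S⟩
  have hSclosed : IsClosed S :=
    hycont.preimage_isClosed_of_isClosed isClosed_Icc isClosed_Iic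
  have hSbdd : BddAbove S := ⟨t₂, fun x hx => hx.1.2⟩
  set t₁ := sSup S with ht₁def
  have ht₁S : t₁ ∈ S := hSclosed.csSup_mem hSne hSbdd
  have ht₁0 : 0 ≤ t₁ := ht₁S.1.1
  have ht₁t₂ : t₁ ≤ t₂ := ht₁S.1.2
  have hyt₁ : y t₁ ≤ M := ht₁S.2
  have ht₁lt : t₁ < t₂ := by
    rcases lt_or_eq_of_le ht₁t₂ with h | h
    · exact h
    · exfalso
      have : y t₂ ≤ M := h ▸ hyt₁
      linarith
  -- on (t₁, t₂], y > M
  have hgt : ∀ t, t₁ < t → t ≤ t₂ → M < y t := by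
    intro t ht ht'
    by_contra h
    push_neg at h
    have : t ∈ S := ⟨⟨le_trans ht₁0 ht.le, ht'⟩, h⟩
    exact absurd (le_csSup hSbdd this) (not_le.mpr ht)
  -- auxiliary function w
  set w : ℝ → ℝ := fun t => y t - b t + N₁ * t with hw
  have hIcc12 : Set.Icc t₁ t₂ ⊆ Set.Icc 0 T :=
    Set.Icc_subset_Icc ht₁0 ht₂.2
  have hwderiv : ∀ t ∈ Set.Icc t₁ t₂, HasDerivAt w (g (y t) + N₁) t := by
    intro t ht
    have h1 := (hy t (hIcc12 ht)).sub (hb t (hIcc12 ht))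
    have h2 : HasDerivAt (fun s : ℝ => N₁ * s) N₁ t := by
      simpa using (hasDerivAt_id t).const_mul N₁
    have := h1.add h2
    have e : g (y t) + N₁ = g (y t) + b' t - b' t + N₁ := by ring
    rw [e]
    exact this
  have hwcont : ContinuousOn w (Set.Icc t₁ t₂) := fun t ht =>
    ((hwderiv t ht).continuousAt).continuousWithinAt
  have hwdiff : DifferentiableOn ℝ w (interior (Set.Icc t₁ t₂)) := by
    intro t ht
    exact ((hwderiv t (interior_subset ht)).differentiableAt).differentiableWithinAt
  have hwanti : AntitoneOn w (Set.Icc t₁ t₂) := by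
    apply antitoneOn_of_deriv_nonpos (convex_Icc t₁ t₂) hwcont hwdiff
    intro t ht
    rw [interior_Icc] at ht
    rw [(hwderiv t ⟨ht.1.le, ht.2.le⟩).deriv]
    have hMy : M < y t := hgt t ht.1 ht.2.le
    have : ξ₀ ≤ y t := le_trans (le_max_right y₀ ξ₀) hMy.le
    have := hξ (y t) this
    linarith
  have hwle : w t₂ ≤ w t₁ :=
    hwanti (Set.left_mem_Icc.mpr ht₁lt.le) (Set.right_mem_Icc.mpr ht₁lt.le) ht₁lt.le
  have hbg := hbgrowth t₁ t₂ ht₁0 ht₁lt ht₂.2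
  simp only [hw] at hwle
  -- y t₂ ≤ y t₁ + (b t₂ - b t₁) - N₁ (t₂ - t₁) ≤ M + N₀
  nlinarith
end

section
/- Let ρ : [0,1] → [0, ρ₊] be measurable, μ(s) = 1 + s^β with β ≥ 0, and define θ(ρ) = ∫₁^ρ μ(s)/s ds. Let u ∈ H¹(0,1). Then |∫₀¹ μ(ρ(y)) u'(y) dy| ≤ 1 + ∫₀¹ μ(ρ(y)) |u'(y)|² dy + (β/4) [sup_{y : ρ(y) ≥ 1} θ(ρ(y))] · ∫₀¹ μ(ρ(y)) |u'(y)|² dy. -/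
open MeasureTheory

private lemma viscous_flux_amgm (c m a : ℝ) (hm1 : 1 ≤ m) (hmc : m ≤ c) (ha : 0 ≤ a) :
    m * a ≤ 1 + c / 4 * (m * a ^ 2) := by
  nlinarith [sq_nonneg (2 - m * a),
    mul_nonneg (mul_nonneg (by linarith : (0:ℝ) ≤ c - m) (by linarith : (0:ℝ) ≤ m))
      (sq_nonneg a)]

/-- Interpolation estimate for the viscous flux integral, with
`μ(s) = 1 + s^β` and `θ(ρ) = ∫₁^ρ μ(s)/s ds`:
`|∫₀¹ μ(ρ)u'| ≤ 1 + ∫₀¹ μ(ρ)|u'|² + (β/4)·sup_{ρ(y)≥1} θ(ρ(y)) · ∫₀¹ μ(ρ)|u'|²`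
(the sup over the empty set being `0`). -/
theorem viscous_flux_interpolation
    (β ρmax : ℝ) (hβ : 0 ≤ β) (hρmax : 0 < ρmax)
    (ρ u : ℝ → ℝ) (hρmeas : Measurable ρ)
    (hρrange : ∀ y, 0 ≤ ρ y ∧ ρ y ≤ ρmax)
    (hu : Differentiable ℝ u)
    (hux : IntervalIntegrable (fun y => (deriv u y) ^ 2) volume 0 1) :
    |∫ y in (0:ℝ)..1, (1 + ρ y ^ β) * deriv u y| ≤
      1 + (∫ y in (0:ℝ)..1, (1 + ρ y ^ β) * (deriv u y) ^ 2) +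
        β / 4 *
          sSup ((fun y => ∫ s in (1:ℝ)..(ρ y), (1 + s ^ β) / s) ''
            {y ∈ Set.Icc (0:ℝ) 1 | 1 ≤ ρ y}) *
          ∫ y in (0:ℝ)..1, (1 + ρ y ^ β) * (deriv u y) ^ 2 := by
  have hρ0 : ∀ y, 0 ≤ ρ y := fun y => (hρrange y).1
  have hρm : ∀ y, ρ y ≤ ρmax := fun y => (hρrange y).2
  set R : ℝ := max 1 ρmax with hRdef
  have hR1 : (1:ℝ) ≤ R := le_max_left _ _
  -- integrability of the θ-integrand on [1, x]
  have hgint : ∀ x : ℝ, 1 ≤ x → IntervalIntegrable (fun s => (1 + s ^ β) / s) volume 1 x := by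
    intro x hx
    apply ContinuousOn.intervalIntegrable
    apply ContinuousOn.div
    · exact continuousOn_const.add ((Real.continuous_rpow_const hβ).continuousOn)
    · exact continuousOn_id
    · intro s hs
      rw [Set.uIcc_of_le hx] at hs
      exact ne_of_gt (lt_of_lt_of_le one_pos hs.1)
  have hθnn : ∀ x : ℝ, 1 ≤ x → 0 ≤ ∫ s in (1:ℝ)..x, (1 + s ^ β) / s := by
    intro x hx
    apply intervalIntegral.integral_nonneg hx
    intro s hs
    have hs1 : (0:ℝ) < s := lt_of_lt_of_le one_pos hs.1
    have : (0:ℝ) ≤ 1 + s ^ β := by positivity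
    positivity
  set Sset := ((fun y => ∫ s in (1:ℝ)..(ρ y), (1 + s ^ β) / s) ''
      {y ∈ Set.Icc (0:ℝ) 1 | 1 ≤ ρ y}) with hSsetdef
  set S := sSup Sset with hSdef
  have hbdd : BddAbove Sset := by
    refine ⟨∫ s in (1:ℝ)..R, (1 + s ^ β) / s, ?_⟩
    rintro _ ⟨y, ⟨hy, hy1⟩, rfl⟩
    refine intervalIntegral.integral_mono_interval le_rfl hy1
      (le_trans (hρm y) (le_max_right 1 ρmax)) ?_ (hgint R hR1)
    refine (ae_restrict_iff' measurableSet_Ioc).2 (Filter.Eventually.of_forall fun s hs => ?_)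
    have hs1 : (0:ℝ) < s := lt_trans one_pos hs.1
    have : (0:ℝ) ≤ 1 + s ^ β := by positivity
    positivity
  have hS0 : 0 ≤ S := by
    rcases Set.eq_empty_or_nonempty Sset with h | ⟨z, hz⟩
    · rw [hSdef, h, Real.sSup_empty]
    · obtain ⟨y, ⟨hy, hy1⟩, rfl⟩ := hz
      exact le_trans (hθnn _ hy1) (le_csSup hbdd ⟨y, ⟨hy, hy1⟩, rfl⟩)
  set c : ℝ := 2 + β * S with hcdef
  have hβS : 0 ≤ β * S := mul_nonneg hβ hS0
  have hc2 : (2:ℝ) ≤ c := by rw [hcdef]; linarith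
  -- pointwise bound μ(ρ y) ≤ c on [0,1]
  have hμle : ∀ y ∈ Set.Icc (0:ℝ) 1, 1 + ρ y ^ β ≤ c := by
    intro y hy
    rcases le_or_gt (ρ y) 1 with h | h
    · have h1 : ρ y ^ β ≤ 1 := Real.rpow_le_one (hρ0 y) h hβ
      rw [hcdef]; linarith
    · have h1 : (1:ℝ) ≤ ρ y := h.le
      have hθS : (∫ s in (1:ℝ)..(ρ y), (1 + s ^ β) / s) ≤ S :=
        le_csSup hbdd ⟨y, ⟨hy, h1⟩, rfl⟩
      rcases eq_or_lt_of_le hβ with hb0 | hb0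
      · rw [← hb0, Real.rpow_zero, hcdef]; linarith
      · have hint : (∫ s in (1:ℝ)..(ρ y), s ^ (β - 1)) = (ρ y ^ β - 1) / β := by
          rw [integral_rpow (Or.inl (by linarith))]
          rw [sub_add_cancel, Real.one_rpow]
        have hmono : (∫ s in (1:ℝ)..(ρ y), s ^ (β - 1)) ≤
            ∫ s in (1:ℝ)..(ρ y), (1 + s ^ β) / s := by
          apply intervalIntegral.integral_mono_on h1 ?_ (hgint _ h1)
          · intro s hs
            have hsp : (0:ℝ) < s := lt_of_lt_of_le one_pos hs.1
            rw [Real.rpow_sub hsp, Real.rpow_one]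
            gcongr
            linarith [Real.rpow_nonneg hsp.le β]
          · apply ContinuousOn.intervalIntegrable
            apply ContinuousOn.rpow_const continuousOn_id
            intro s hs
            rw [Set.uIcc_of_le h1] at hs
            exact Or.inl (ne_of_gt (lt_of_lt_of_le one_pos hs.1))
        have h2 : (ρ y ^ β - 1) / β ≤ S := by rw [← hint]; exact hmono.trans hθS
        have h3 : ρ y ^ β - 1 ≤ β * S := by
          rw [div_le_iff₀ hb0] at h2; linarith [h2]
        rw [hcdef]; linarith
  -- integrability facts
  have hμnn : ∀ y, (0:ℝ) ≤ 1 + ρ y ^ β := by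
    intro y; have := Real.rpow_nonneg (hρ0 y) β; linarith
  have hμ1 : ∀ y, (1:ℝ) ≤ 1 + ρ y ^ β := by
    intro y; have := Real.rpow_nonneg (hρ0 y) β; linarith
  have hCle : ∀ y, 1 + ρ y ^ β ≤ 1 + R ^ β := by
    intro y
    have := Real.rpow_le_rpow (hρ0 y) (le_trans (hρm y) (le_max_right 1 ρmax)) hβ
    linarith
  have hC0 : (0:ℝ) ≤ 1 + R ^ β := le_trans (hμnn 0) (hCle 0)
  have hmeasμ : Measurable fun y => 1 + ρ y ^ β :=
    measurable_const.add ((Real.continuous_rpow_const hβ).measurable.comp hρmeas)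
  have hmeasd : Measurable (deriv u) := measurable_deriv u
  have h1 : IntervalIntegrable (fun y => (1 + ρ y ^ β) * (deriv u y) ^ 2) volume 0 1 := by
    apply (hux.const_mul (1 + R ^ β)).mono_fun
      ((hmeasμ.mul (hmeasd.pow_const 2)).aestronglyMeasurable)
    refine Filter.Eventually.of_forall fun y => ?_
    simp only [Real.norm_eq_abs, Pi.mul_apply, abs_mul, abs_of_nonneg (hμnn y), abs_of_nonneg hC0]
    exact mul_le_mul_of_nonneg_right (hCle y) (abs_nonneg _)
  have h2 : IntervalIntegrable (fun y => (1 + ρ y ^ β) * deriv u y) volume 0 1 := by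
    have hgI : IntervalIntegrable
        (fun y => (1 + R ^ β) * ((1 + (deriv u y) ^ 2) / 2)) volume 0 1 :=
      ((intervalIntegrable_const.add hux).div_const 2).const_mul _
    apply hgI.mono_fun ((hmeasμ.mul hmeasd).aestronglyMeasurable)
    refine Filter.Eventually.of_forall fun y => ?_
    simp only [Real.norm_eq_abs, Pi.mul_apply, abs_mul]
    have h1' : |deriv u y| ≤ (1 + (deriv u y) ^ 2) / 2 := by
      nlinarith [sq_nonneg (1 - |deriv u y|), sq_abs (deriv u y), abs_nonneg (deriv u y)]
    have h2' : (0:ℝ) ≤ (1 + (deriv u y) ^ 2) / 2 := by positivity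
    calc |1 + ρ y ^ β| * |deriv u y| ≤ (1 + R ^ β) * ((1 + (deriv u y) ^ 2) / 2) := by
          rw [abs_of_nonneg (hμnn y)]
          exact mul_le_mul (hCle y) h1' (abs_nonneg _) hC0
      _ ≤ |(1 + R ^ β)| * |(1 + (deriv u y) ^ 2) / 2| := by
          rw [abs_of_nonneg hC0, abs_of_nonneg h2']
  set I := ∫ y in (0:ℝ)..1, (1 + ρ y ^ β) * (deriv u y) ^ 2 with hIdef
  have hI0 : 0 ≤ I := by
    rw [hIdef]
    exact intervalIntegral.integral_nonneg (by norm_num)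
      (fun y _ => mul_nonneg (hμnn y) (sq_nonneg _))
  have key : |∫ y in (0:ℝ)..1, (1 + ρ y ^ β) * deriv u y| ≤ 1 + c / 4 * I := by
    calc |∫ y in (0:ℝ)..1, (1 + ρ y ^ β) * deriv u y|
        ≤ ∫ y in (0:ℝ)..1, |(1 + ρ y ^ β) * deriv u y| :=
          intervalIntegral.abs_integral_le_integral_abs (by norm_num)
      _ ≤ ∫ y in (0:ℝ)..1, (1 + c / 4 * ((1 + ρ y ^ β) * (deriv u y) ^ 2)) := by
          apply intervalIntegral.integral_mono_on (by norm_num) h2.abs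
            (intervalIntegrable_const.add (h1.const_mul _))
          intro y hy
          rw [abs_mul, abs_of_nonneg (hμnn y), ← sq_abs (deriv u y)]
          exact viscous_flux_amgm c _ _ (hμ1 y) (hμle y hy) (abs_nonneg _)
      _ = 1 + c / 4 * I := by
          rw [intervalIntegral.integral_add intervalIntegrable_const (h1.const_mul _),
            intervalIntegral.integral_const_mul, intervalIntegral.integral_const]
          simp [hIdef]
  have hfin : c / 4 * I = I / 2 + β / 4 * S * I := by rw [hcdef]; ring
  calc |∫ y in (0:ℝ)..1, (1 + ρ y ^ β) * deriv u y| ≤ 1 + c / 4 * I := key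
    _ ≤ 1 + I + β / 4 * S * I := by rw [hfin]; linarith
end
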